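/- Let g̃ ∈ I², g̃' ∈ I², and let h ∈ GL₂(K) be such that v(det h) is even and g̃' = h⁻¹·g̃·h. Then h ∈ I¹. -/

import Mathlib

noncomputable section

/-- The valuation `v` on `K = k((ε))`, with `v 0 = ∞`. -/
def lv {k : Type*} [Field k] (x : LaurentSeries k) : WithTop ℤ := x.orderTop

/-- The uniformizer `ε` of `k((ε))`. -/
def eps (k : Type*) [Field k] : LaurentSeries k := HahnSeries.single (1 : ℤ) 1

/-- The set `I¹` of matrices `[[a,b],[c,d]]` with `v a = v d = m`, `v b ≥ m`, `v c > m`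
for some `m ∈ ℤ`. -/
def I1 (k : Type*) [Field k] : Set (Matrix (Fin 2) (Fin 2) (LaurentSeries k)) :=
  {g | ∃ m : ℤ, lv (g 0 0) = (m : WithTop ℤ) ∧ lv (g 1 1) = (m : WithTop ℤ) ∧
    (m : WithTop ℤ) ≤ lv (g 0 1) ∧ (m : WithTop ℤ) < lv (g 1 0)}

/-- The set `I²` of matrices `[[c,d],[a,b]]` with `v a = m+1`, `v d = m`, `v b ≥ m+1`,
`v c ≥ m+1` for some `m ∈ ℤ`. -/
def I2 (k : Type*) [Field k] : Set (Matrix (Fin 2) (Fin 2) (LaurentSeries k)) :=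
  {g | ∃ m : ℤ, lv (g 1 0) = ((m + 1 : ℤ) : WithTop ℤ) ∧ lv (g 0 1) = (m : WithTop ℤ) ∧
    ((m + 1 : ℤ) : WithTop ℤ) ≤ lv (g 1 1) ∧ ((m + 1 : ℤ) : WithTop ℤ) ≤ lv (g 0 0)}

section Statement6Aux

variable {k : Type*} [Field k]

lemma lv_mul (x y : LaurentSeries k) : lv (x * y) = lv x + lv y := by
  by_cases hx : x = 0
  · simp [lv, hx]
  by_cases hy : y = 0
  · simp [lv, hy]
  rw [lv, lv, lv, ← HahnSeries.order_eq_orderTop_of_ne_zero hx, ← HahnSeries.order_eq_orderTop_of_ne_zero hy,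
    ← HahnSeries.order_eq_orderTop_of_ne_zero (mul_ne_zero hx hy), HahnSeries.order_mul hx hy,
    WithTop.coe_add]

lemma lv_mul_eq {x y : LaurentSeries k} {a b c : ℤ} (hx : lv x = (a : WithTop ℤ))
    (hy : lv y = (b : WithTop ℤ)) (hc : c = a + b) : lv (x * y) = (c : WithTop ℤ) := by
  rw [lv_mul, hx, hy, ← WithTop.coe_add, hc]

lemma lv_mul_ge {x y : LaurentSeries k} {a b c : ℤ} (hx : (a : WithTop ℤ) ≤ lv x)
    (hy : (b : WithTop ℤ) ≤ lv y) (hc : c ≤ a + b) : (c : WithTop ℤ) ≤ lv (x * y) := by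
  rw [lv_mul]
  refine le_trans (WithTop.coe_le_coe.mpr hc) ?_
  rw [WithTop.coe_add]
  exact add_le_add hx hy

/-- `v(x - y) = v y` when `v y < v x`. -/
lemma lv_sub_eq_right {x y : LaurentSeries k} (h : lv y < lv x) : lv (x - y) = lv y := by
  have hxy : x - y = -(y - x) := by ring
  rw [lv, hxy, HahnSeries.orderTop_neg]
  exact HahnSeries.orderTop_sub h

/-- `v(x + y - z) = v x` when `v x < v y` and `v x < v z`. -/
lemma lv_add_sub_eq {x y z : LaurentSeries k} (hy : lv x < lv y) (hz : lv x < lv z) :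
    lv (x + y - z) = lv x := by
  have h1 : x + y - z = x + (y - z) := by ring
  rw [lv, h1]
  exact HahnSeries.orderTop_add_eq_left
    (lt_of_lt_of_le (lt_min hy hz) HahnSeries.min_orderTop_le_orderTop_sub)

lemma lv_add_sub_ge {x y z : LaurentSeries k} {e : WithTop ℤ} (hx : e ≤ lv x)
    (hy : e ≤ lv y) (hz : e ≤ lv z) : e ≤ lv (x + y - z) := by
  have h1 : e ≤ (x + y).orderTop :=
    le_trans (le_min hx hy) HahnSeries.min_orderTop_le_orderTop_add
  exact le_trans (le_min h1 hz) HahnSeries.min_orderTop_le_orderTop_sub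

lemma wt_cancel {a : WithTop ℤ} {b c d : ℤ} (h : a + (b : WithTop ℤ) = (c : WithTop ℤ))
    (hd : d = c - b) : a = (d : WithTop ℤ) := by
  cases a with
  | top => simp at h
  | coe a =>
    rw [← WithTop.coe_add, WithTop.coe_eq_coe] at h
    rw [WithTop.coe_eq_coe]
    omega

lemma wt_le_cancel {a : WithTop ℤ} {b c d : ℤ} (h : (c : WithTop ℤ) ≤ a + (b : WithTop ℤ))
    (hd : d ≤ c - b) : (d : WithTop ℤ) ≤ a := by
  cases a with
  | top => exact le_top
  | coe a =>
    rw [← WithTop.coe_add, WithTop.coe_le_coe] at h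
    rw [WithTop.coe_le_coe]
    omega

lemma wt_lt_succ {a : WithTop ℤ} {t : ℤ} (h : (t : WithTop ℤ) < a) :
    ((t + 1 : ℤ) : WithTop ℤ) ≤ a := by
  cases a with
  | top => exact le_top
  | coe a =>
    rw [WithTop.coe_lt_coe] at h
    rw [WithTop.coe_le_coe]
    omega

end Statement6Aux

theorem statement6 (k : Type*) [Field k] [IsAlgClosed k]
    (g g' : Matrix (Fin 2) (Fin 2) (LaurentSeries k))
    (hg : g ∈ I2 k) (hg' : g' ∈ I2 k)
    (h : GL (Fin 2) (LaurentSeries k))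
    (heven : ∃ m : ℤ, lv h.val.det = ((2 * m : ℤ) : WithTop ℤ))
    (hconj : g' = (h⁻¹).val * g * h.val) :
    h.val ∈ I1 k := by
  obtain ⟨m, hgC, hgB, hgD, hgA⟩ := hg
  obtain ⟨m', hgC', hgB', hgD', hgA'⟩ := hg'
  obtain ⟨mh, hdet⟩ := heven
  -- the conjugation relation in the form `h * g' = g * h`
  have hinv : h.val * (h⁻¹).val = 1 := h.mul_inv
  have key : h.val * g' = g * h.val := by
    rw [hconj, ← Matrix.mul_assoc, ← Matrix.mul_assoc, hinv, Matrix.one_mul]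
  -- determinants of `g` and `g'` agree, forcing `m' = m`
  have hinv' : (h⁻¹).val * h.val = 1 := h.inv_mul
  have hdeq : g'.det = g.det := by
    rw [hconj, Matrix.det_mul, Matrix.det_mul]
    have h2 : (h⁻¹).val.det * h.val.det = 1 := by
      rw [← Matrix.det_mul, hinv', Matrix.det_one]
    calc (h⁻¹).val.det * g.det * h.val.det
        = (h⁻¹).val.det * h.val.det * g.det := by ring
      _ = g.det := by rw [h2, one_mul]
  have lvdetg : lv g.det = ((2 * m + 1 : ℤ) : WithTop ℤ) := by
    rw [Matrix.det_fin_two g]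
    have h1 : lv (g 0 1 * g 1 0) = ((2 * m + 1 : ℤ) : WithTop ℤ) :=
      lv_mul_eq hgB hgC (by ring)
    have h2 : ((2 * m + 2 : ℤ) : WithTop ℤ) ≤ lv (g 0 0 * g 1 1) :=
      lv_mul_ge hgA hgD (by ring_nf; omega)
    rw [lv_sub_eq_right (by
      rw [h1]
      exact lt_of_lt_of_le (WithTop.coe_lt_coe.mpr (by omega)) h2), h1]
  have lvdetg' : lv g'.det = ((2 * m' + 1 : ℤ) : WithTop ℤ) := by
    rw [Matrix.det_fin_two g']
    have h1 : lv (g' 0 1 * g' 1 0) = ((2 * m' + 1 : ℤ) : WithTop ℤ) :=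
      lv_mul_eq hgB' hgC' (by ring)
    have h2 : ((2 * m' + 2 : ℤ) : WithTop ℤ) ≤ lv (g' 0 0 * g' 1 1) :=
      lv_mul_ge hgA' hgD' (by ring_nf; omega)
    rw [lv_sub_eq_right (by
      rw [h1]
      exact lt_of_lt_of_le (WithTop.coe_lt_coe.mpr (by omega)) h2), h1]
  have hmm' : m' = m := by
    rw [hdeq, lvdetg] at lvdetg'
    have := WithTop.coe_eq_coe.mp lvdetg'
    omega
  rw [hmm'] at hgC' hgB' hgD' hgA'
  -- the two entry equations we need
  have eA : h.val 0 0 * g' 0 1 =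
      g 0 1 * h.val 1 1 + g 0 0 * h.val 0 1 - g' 1 1 * h.val 0 1 := by
    have h01 := congrFun (congrFun key 0) 1
    simp only [Matrix.mul_apply, Fin.sum_univ_two] at h01
    linear_combination h01
  have eB : h.val 1 0 * g' 0 1 =
      g 1 0 * h.val 0 1 + g 1 1 * h.val 1 1 - g' 1 1 * h.val 1 1 := by
    have h11 := congrFun (congrFun key 1) 1
    simp only [Matrix.mul_apply, Fin.sum_univ_two] at h11
    linear_combination h11
  rcases le_or_gt (lv (h.val 1 1)) (lv (h.val 0 1)) with hSQ | hQS
  · -- case `v(h 1 1) ≤ v(h 0 1)` : `h ∈ I¹` directly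
    by_cases hStop : lv (h.val 1 1) = ⊤
    · -- then `h 1 1 = h 0 1 = 0`, so `det h = 0`, contradicting `heven`
      exfalso
      have hQtop : lv (h.val 0 1) = ⊤ := le_antisymm le_top (hStop ▸ hSQ)
      have hS0 : h.val 1 1 = 0 := HahnSeries.orderTop_eq_top.mp hStop
      have hQ0 : h.val 0 1 = 0 := HahnSeries.orderTop_eq_top.mp hQtop
      have hd0 : h.val.det = 0 := by rw [Matrix.det_fin_two, hS0, hQ0]; ring
      rw [hd0, lv, HahnSeries.orderTop_zero] at hdet
      exact WithTop.top_ne_coe hdet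
    · obtain ⟨t, ht⟩ := WithTop.ne_top_iff_exists.mp hStop
      -- `ht : ↑t = lv (h 1 1)`
      have hQt : (t : WithTop ℤ) ≤ lv (h.val 0 1) := le_trans (le_of_eq ht) hSQ
      have lA : lv (h.val 0 0 * g' 0 1) = ((m + t : ℤ) : WithTop ℤ) := by
        rw [eA]
        have h1 : lv (g 0 1 * h.val 1 1) = ((m + t : ℤ) : WithTop ℤ) :=
          lv_mul_eq hgB ht.symm rfl
        have h2 : ((m + 1 + t : ℤ) : WithTop ℤ) ≤ lv (g 0 0 * h.val 0 1) :=
          lv_mul_ge hgA hQt (by omega)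
        have h3 : ((m + 1 + t : ℤ) : WithTop ℤ) ≤ lv (g' 1 1 * h.val 0 1) :=
          lv_mul_ge hgD' hQt (by omega)
        rw [lv_add_sub_eq
          (by rw [h1]; exact lt_of_lt_of_le (WithTop.coe_lt_coe.mpr (by omega)) h2)
          (by rw [h1]; exact lt_of_lt_of_le (WithTop.coe_lt_coe.mpr (by omega)) h3), h1]
      rw [lv_mul, hgB'] at lA
      have hP : lv (h.val 0 0) = (t : WithTop ℤ) := wt_cancel lA (by ring)
      have lB : ((m + 1 + t : ℤ) : WithTop ℤ) ≤ lv (h.val 1 0 * g' 0 1) := by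
        rw [eB]
        exact lv_add_sub_ge (lv_mul_ge hgC.ge hQt (by omega))
          (lv_mul_ge hgD ht.le (by omega)) (lv_mul_ge hgD' ht.le (by omega))
      rw [lv_mul, hgB'] at lB
      have hR : ((t + 1 : ℤ) : WithTop ℤ) ≤ lv (h.val 1 0) := wt_le_cancel lB (by omega)
      exact ⟨t, hP, ht.symm, hQt,
        lt_of_lt_of_le (WithTop.coe_lt_coe.mpr (by omega)) hR⟩
  · -- case `v(h 0 1) < v(h 1 1)` : contradiction with evenness of `v(det h)`
    exfalso
    have hQtop : lv (h.val 0 1) ≠ ⊤ := ne_top_of_lt hQS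
    obtain ⟨t, ht⟩ := WithTop.ne_top_iff_exists.mp hQtop
    have hS1 : ((t + 1 : ℤ) : WithTop ℤ) ≤ lv (h.val 1 1) := wt_lt_succ (ht ▸ hQS)
    have lB : lv (h.val 1 0 * g' 0 1) = ((m + 1 + t : ℤ) : WithTop ℤ) := by
      rw [eB]
      have h1 : lv (g 1 0 * h.val 0 1) = ((m + 1 + t : ℤ) : WithTop ℤ) :=
        lv_mul_eq hgC ht.symm (by ring)
      have h2 : ((m + 2 + t : ℤ) : WithTop ℤ) ≤ lv (g 1 1 * h.val 1 1) :=
        lv_mul_ge hgD hS1 (by omega)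
      have h3 : ((m + 2 + t : ℤ) : WithTop ℤ) ≤ lv (g' 1 1 * h.val 1 1) :=
        lv_mul_ge hgD' hS1 (by omega)
      rw [lv_add_sub_eq
        (by rw [h1]; exact lt_of_lt_of_le (WithTop.coe_lt_coe.mpr (by omega)) h2)
        (by rw [h1]; exact lt_of_lt_of_le (WithTop.coe_lt_coe.mpr (by omega)) h3), h1]
    rw [lv_mul, hgB'] at lB
    have hR : lv (h.val 1 0) = ((t + 1 : ℤ) : WithTop ℤ) := wt_cancel lB (by ring)
    have lAbound : ((m + 1 + t : ℤ) : WithTop ℤ) ≤ lv (h.val 0 0 * g' 0 1) := by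
      rw [eA]
      exact lv_add_sub_ge (lv_mul_ge hgB.ge hS1 (by omega))
        (lv_mul_ge hgA ht.le (by omega)) (lv_mul_ge hgD' ht.le (by omega))
    rw [lv_mul, hgB'] at lAbound
    have hP1 : ((t + 1 : ℤ) : WithTop ℤ) ≤ lv (h.val 0 0) := wt_le_cancel lAbound (by omega)
    -- now `v(det h) = 2t + 1`, odd
    have lvdeth : lv h.val.det = ((2 * t + 1 : ℤ) : WithTop ℤ) := by
      rw [Matrix.det_fin_two]
      have h1 : lv (h.val 0 1 * h.val 1 0) = ((2 * t + 1 : ℤ) : WithTop ℤ) :=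
        lv_mul_eq ht.symm hR (by ring)
      have h2 : ((2 * t + 2 : ℤ) : WithTop ℤ) ≤ lv (h.val 0 0 * h.val 1 1) :=
        lv_mul_ge hP1 hS1 (by omega)
      rw [lv_sub_eq_right (by
        rw [h1]
        exact lt_of_lt_of_le (WithTop.coe_lt_coe.mpr (by omega)) h2), h1]
    rw [hdet] at lvdeth
    have := WithTop.coe_eq_coe.mp lvdeth
    omega
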